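/- For every positive integer n, every real σ > 0 and every ε > 0 there exists a constant C > 0 such that for all real R ≥ 2: ∑_{p prime, p < R^σ} (log p)^n · ∑_{m=0}^{⌊2 log R⌋} 2^m · m · p^{3m/4} · (p−1)/(p+1)^{m+1} ≤ C · R^{max(3σ/4, 0.27) + ε}. -/
import Mathlib
open Real Finset

lemma key_small (q : ℝ) (hq : 0 ≤ q) : 2 * q ^ ((3:ℝ)/4) ≤ (57/50) * (q + 1) := by
  have h34 : (0:ℝ) ≤ q ^ ((3:ℝ)/4) := Real.rpow_nonneg hq _
  have h4 : (q ^ ((3:ℝ)/4))^(4:ℕ) = q^(3:ℕ) := by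
    rw [← Real.rpow_natCast (q ^ ((3:ℝ)/4)) 4, ← Real.rpow_mul hq, ← Real.rpow_natCast q 3]
    norm_num
  refine le_of_pow_le_pow_left₀ (n := 4) (by norm_num) (by positivity) ?_
  calc (2 * q ^ ((3:ℝ)/4))^4 = 16 * q^(3:ℕ) := by rw [mul_pow, h4]; ring
  _ ≤ (27/16) * (q+1)^4 := by
      nlinarith [mul_nonneg (sq_nonneg (q-3)) (by positivity : (0:ℝ) ≤ 27*q^2+14*q+3)]
  _ ≤ ((57/50) * (q+1))^4 := by
      rw [mul_pow]
      have : (0:ℝ) ≤ (q+1)^4 := by positivity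
      nlinarith

lemma c_exp : (57/50:ℝ) ≤ Real.exp 0.1313 := by
  have h := Real.add_one_le_exp (0.1313/64 : ℝ)
  calc (57/50:ℝ) ≤ ((0.1313/64 : ℝ) + 1)^(64:ℕ) := by norm_num
  _ ≤ (Real.exp (0.1313/64))^(64:ℕ) := pow_le_pow_left₀ (by norm_num) h 64
  _ = Real.exp 0.1313 := by rw [← Real.exp_nat_mul]; norm_num

lemma geom_bound (K : ℕ) : ∑ m ∈ Finset.range K, (m:ℝ) * (1/2:ℝ)^m ≤ 2 := by
  have h : HasSum (fun m : ℕ => (m:ℝ) * (1/2:ℝ)^m) ((1/2) / (1 - 1/2)^2) :=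
    hasSum_coe_mul_geometric_of_norm_lt_one
      (by rw [Real.norm_eq_abs, abs_of_nonneg] <;> norm_num)
  have h2 := sum_le_hasSum (Finset.range K) (fun i _ => by positivity) h
  norm_num at h2
  exact h2

lemma term_le_gen (q : ℝ) (hq : 2 ≤ q) (m : ℕ) (c : ℝ) (hc : 0 ≤ c)
    (key : 2 * q ^ ((3:ℝ)/4) ≤ c * (q + 1)) :
    (2:ℝ)^m * m * q ^ (3*(m:ℝ)/4) * (q - 1) / (q + 1)^(m+1) ≤ (m:ℝ) * c^m := by
  have hq0 : (0:ℝ) < q := by linarith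
  have hD : (0:ℝ) < (q+1)^(m+1) := by positivity
  have hpow : q ^ (3*(m:ℝ)/4) = (q ^ ((3:ℝ)/4))^m := by
    rw [show 3*(m:ℝ)/4 = ((3:ℝ)/4) * m by ring, Real.rpow_mul hq0.le, Real.rpow_natCast]
  rw [hpow, div_le_iff₀ hD]
  have e1 : (2:ℝ)^m * m * (q ^ ((3:ℝ)/4))^m * (q - 1)
      = (m:ℝ) * ((2 * q ^ ((3:ℝ)/4))^m * (q-1)) := by rw [mul_pow]; ring
  have e2 : (m:ℝ) * c^m * (q+1)^(m+1) = (m:ℝ) * ((c*(q+1))^m * (q+1)) := by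
    rw [mul_pow, pow_succ]; ring
  rw [e1, e2]
  have h34 : (0:ℝ) ≤ q ^ ((3:ℝ)/4) := Real.rpow_nonneg hq0.le _
  refine mul_le_mul_of_nonneg_left ?_ (Nat.cast_nonneg m)
  exact mul_le_mul (pow_le_pow_left₀ (by linarith) key m) (by linarith) (by linarith)
    (pow_nonneg (mul_nonneg hc (by linarith)) m)

lemma term_le_large (q : ℝ) (hq : 256 ≤ q) (m : ℕ) :
    (2:ℝ)^m * m * q ^ (3*(m:ℝ)/4) * (q - 1) / (q + 1)^(m+1)
      ≤ (m:ℝ) * (1/2:ℝ)^m * (4 * q ^ (-(1:ℝ)/4)) := by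
  have hq0 : (0:ℝ) < q := by linarith
  set s := 2 * q ^ (-(1:ℝ)/4) with hs
  have hs0 : (0:ℝ) ≤ s := by positivity
  have hsq : s * q = 2 * q ^ ((3:ℝ)/4) := by
    have h1 : q ^ (-(1:ℝ)/4) * q = q ^ ((3:ℝ)/4) := by
      calc q ^ (-(1:ℝ)/4) * q = q ^ (-(1:ℝ)/4) * q ^ (1:ℝ) := by rw [Real.rpow_one]
      _ = q ^ ((-(1:ℝ)/4) + 1) := (Real.rpow_add hq0 _ _).symm
      _ = q ^ ((3:ℝ)/4) := by norm_num
    rw [hs, mul_assoc, h1]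
  have key : 2 * q ^ ((3:ℝ)/4) ≤ s * (q+1) := by nlinarith [hs0]
  have h1 := term_le_gen q (by linarith) m s hs0 key
  have hs12 : s ≤ 1/2 := by
    have h4 : (4:ℝ) ≤ q ^ ((1:ℝ)/4) := by
      calc (4:ℝ) = (256:ℝ) ^ ((1:ℝ)/4) := by
            rw [show (256:ℝ) = 4^(4:ℕ) by norm_num, ← Real.rpow_natCast 4 4,
              ← Real.rpow_mul (by norm_num : (0:ℝ) ≤ 4)]
            norm_num
      _ ≤ q ^ ((1:ℝ)/4) := Real.rpow_le_rpow (by norm_num) hq (by norm_num)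
    have hinv : q ^ (-(1:ℝ)/4) = (q ^ ((1:ℝ)/4))⁻¹ := by
      rw [show (-(1:ℝ)/4) = -((1:ℝ)/4) by ring, Real.rpow_neg hq0.le]
    have h40 : (0:ℝ) < q ^ ((1:ℝ)/4) := by positivity
    have h5 : (q ^ ((1:ℝ)/4))⁻¹ ≤ 4⁻¹ := inv_anti₀ (by norm_num) h4
    rw [hs, hinv]
    linarith
  refine h1.trans ?_
  rcases m with _ | k
  · simp
  · have hss : s^(k+1) ≤ (1/2:ℝ)^(k+1) * (2*s) := by
      have h' : s^k * s ≤ (1/2:ℝ)^k * s :=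
        mul_le_mul_of_nonneg_right (pow_le_pow_left₀ hs0 hs12 k) hs0
      calc s^(k+1) = s^k * s := by rw [pow_succ]
      _ ≤ (1/2:ℝ)^k * s := h'
      _ = (1/2:ℝ)^(k+1) * (2*s) := by rw [pow_succ]; ring
    calc ((k+1:ℕ):ℝ) * s^(k+1) ≤ ((k+1:ℕ):ℝ) * ((1/2:ℝ)^(k+1) * (2*s)) :=
          mul_le_mul_of_nonneg_left hss (Nat.cast_nonneg _)
    _ = ((k+1:ℕ):ℝ) * (1/2:ℝ)^(k+1) * (4 * q ^ (-(1:ℝ)/4)) := by rw [hs]; ring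

lemma rpow_neg_quarter_le {q X : ℝ} (hq : 0 < q) (h : q ^ ((3:ℝ)/4) ≤ X) :
    q ^ (-(1:ℝ)/4) ≤ X * q⁻¹ := by
  have h1 : q ^ (-(1:ℝ)/4) * q = q ^ ((3:ℝ)/4) := by
    calc q ^ (-(1:ℝ)/4) * q = q ^ (-(1:ℝ)/4) * q ^ (1:ℝ) := by rw [Real.rpow_one]
    _ = q ^ ((-(1:ℝ)/4) + 1) := (Real.rpow_add hq _ _).symm
    _ = q ^ ((3:ℝ)/4) := by norm_num
  rw [show X * q⁻¹ = X / q by ring, le_div_iff₀ hq, h1]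
  exact h

set_option maxHeartbeats 1000000 in
theorem stmt5 (n : ℕ) (hn : 0 < n) (σ : ℝ) (hσ : 0 < σ) (ε : ℝ) (hε : 0 < ε) :
    ∃ C > (0:ℝ), ∀ R : ℝ, 2 ≤ R →
      (∑ p ∈ Finset.range (Nat.ceil (R ^ σ) + 1),
        if Nat.Prime p ∧ (p:ℝ) < R ^ σ then
          (Real.log p)^n *
            ∑ m ∈ Finset.range (Nat.floor (2 * Real.log R) + 1),
              (2:ℝ)^m * (m:ℝ) * (p:ℝ) ^ (3*(m:ℝ)/4) * ((p:ℝ) - 1) / ((p:ℝ) + 1)^(m+1)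
        else 0)
      ≤ C * R ^ (max (3*σ/4) 0.27 + ε) := by
  have hlog256 : (0:ℝ) < Real.log 256 := Real.log_pos (by norm_num)
  set δ2 : ℝ := ε / (n+1) with hδ2def
  have hδ2 : 0 < δ2 := by positivity
  set C1 : ℝ := 256 * (Real.log 256)^n * (16 / (0.0037:ℝ)^2) with hC1def
  set C2 : ℝ := 8 * σ^n * (2+σ) * (1 + 1/δ2)^(n+1) with hC2def
  have hC1 : 0 < C1 := by
    apply mul_pos (mul_pos (by norm_num) (pow_pos hlog256 n)); norm_num
  have hC2 : 0 < C2 := by positivity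
  clear_value δ2 C1 C2
  refine ⟨C1 + C2, by linarith, ?_⟩
  intro R hR
  have hR0 : (0:ℝ) < R := by linarith
  have hR1 : (1:ℝ) ≤ R := by linarith
  set L := Real.log R with hLdef
  have hLhalf : (1/2:ℝ) ≤ L := by
    have h2 : Real.log 2 ≤ L := Real.log_le_log (by norm_num) hR
    have := Real.log_two_gt_d9
    linarith
  have hL0 : (0:ℝ) < L := by linarith
  set Rσ := R ^ σ with hRσdef
  have hRσ1 : (1:ℝ) ≤ Rσ := by
    calc (1:ℝ) = 1 ^ σ := (Real.one_rpow σ).symm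
    _ ≤ R ^ σ := Real.rpow_le_rpow zero_le_one hR1 hσ.le
  set M := Nat.floor (2 * L) with hMdef
  set N := Nat.ceil Rσ with hNdef
  have hMle : (M:ℝ) ≤ 2 * L := Nat.floor_le (by positivity)
  set E := max (3*σ/4) 0.27 + ε with hEdef
  set B1 : ℝ := (Real.log 256)^n * (((M:ℝ)+1)^2 * (57/50)^M) with hB1def
  set W : ℝ := (σ*L)^n * (8 * R^(3*σ/4)) with hWdef
  clear_value L Rσ M N E B1 W
  have hσL : (0:ℝ) ≤ σ * L := mul_nonneg hσ.le hL0.le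
  have hW0 : (0:ℝ) ≤ W := by
    rw [hWdef]
    exact mul_nonneg (pow_nonneg hσL n) (by positivity)
  have hB10 : (0:ℝ) ≤ B1 := by
    rw [hB1def]
    exact mul_nonneg (pow_nonneg hlog256.le n) (by positivity)
  -- pointwise bound
  have hkey : ∀ p ∈ Finset.range (N+1),
      (if Nat.Prime p ∧ (p:ℝ) < Rσ then
          (Real.log p)^n *
            ∑ m ∈ Finset.range (M + 1),
              (2:ℝ)^m * (m:ℝ) * (p:ℝ) ^ (3*(m:ℝ)/4) * ((p:ℝ) - 1) / ((p:ℝ) + 1)^(m+1)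
        else 0)
      ≤ (if p < 256 then B1 else 0) + W * ((p:ℝ))⁻¹ := by
    intro p _
    have hWp : (0:ℝ) ≤ W * ((p:ℝ))⁻¹ := by
      apply mul_nonneg hW0; positivity
    by_cases hc : Nat.Prime p ∧ (p:ℝ) < Rσ
    · rw [if_pos hc]
      have hp2 : 2 ≤ p := hc.1.two_le
      have hq2 : (2:ℝ) ≤ (p:ℝ) := by exact_mod_cast hp2
      have hq0 : (0:ℝ) < (p:ℝ) := by linarith
      have hlogp0 : 0 ≤ Real.log p := Real.log_nonneg (by linarith)
      have hFnn : 0 ≤ ∑ m ∈ Finset.range (M + 1),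
          (2:ℝ)^m * (m:ℝ) * (p:ℝ) ^ (3*(m:ℝ)/4) * ((p:ℝ) - 1) / ((p:ℝ) + 1)^(m+1) := by
        apply Finset.sum_nonneg
        intro m _
        apply div_nonneg _ (by positivity)
        have : (0:ℝ) ≤ (p:ℝ) - 1 := by linarith
        positivity
      by_cases h256 : p < 256
      · rw [if_pos h256]
        have hq256 : (p:ℝ) ≤ 256 := by exact_mod_cast h256.le
        have h1 : (Real.log p)^n ≤ (Real.log 256)^n :=
          pow_le_pow_left₀ hlogp0 (Real.log_le_log hq0 hq256) n
        have h2 : ∑ m ∈ Finset.range (M + 1),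
            (2:ℝ)^m * (m:ℝ) * (p:ℝ) ^ (3*(m:ℝ)/4) * ((p:ℝ) - 1) / ((p:ℝ) + 1)^(m+1)
            ≤ ((M:ℝ)+1)^2 * (57/50)^M := by
          calc _ ≤ ∑ m ∈ Finset.range (M + 1), (m:ℝ) * (57/50:ℝ)^m :=
                Finset.sum_le_sum fun m _ =>
                  term_le_gen _ hq2 m _ (by norm_num) (key_small _ (by linarith))
          _ ≤ ∑ _m ∈ Finset.range (M + 1), (M:ℝ) * (57/50:ℝ)^M := by
                apply Finset.sum_le_sum
                intro m hm
                have hmM : m ≤ M := Nat.lt_succ_iff.mp (Finset.mem_range.mp hm)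
                apply mul_le_mul (by exact_mod_cast hmM)
                  (pow_le_pow_right₀ (by norm_num) hmM) (by positivity) (Nat.cast_nonneg M)
          _ = ((M:ℝ)+1) * ((M:ℝ) * (57/50:ℝ)^M) := by
                rw [Finset.sum_const, Finset.card_range, nsmul_eq_mul]; push_cast; ring
          _ ≤ ((M:ℝ)+1)^2 * (57/50:ℝ)^M := by
                have h0 : (0:ℝ) ≤ (57/50:ℝ)^M := by positivity
                nlinarith [Nat.cast_nonneg (α := ℝ) M]
        have := mul_le_mul h1 h2 hFnn (pow_nonneg hlog256.le n)
        rw [hB1def]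
        linarith
      · rw [if_neg h256]
        push_neg at h256
        have hq256 : (256:ℝ) ≤ (p:ℝ) := by exact_mod_cast h256
        have h1 : (Real.log p)^n ≤ (σ*L)^n := by
          apply pow_le_pow_left₀ hlogp0
          calc Real.log p ≤ Real.log Rσ := Real.log_le_log hq0 hc.2.le
          _ = σ * L := by rw [hRσdef, Real.log_rpow hR0, ← hLdef]
        have h2 : ∑ m ∈ Finset.range (M + 1),
            (2:ℝ)^m * (m:ℝ) * (p:ℝ) ^ (3*(m:ℝ)/4) * ((p:ℝ) - 1) / ((p:ℝ) + 1)^(m+1)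
            ≤ 8 * (p:ℝ) ^ (-(1:ℝ)/4) := by
          calc _ ≤ ∑ m ∈ Finset.range (M + 1),
                (m:ℝ) * (1/2:ℝ)^m * (4 * (p:ℝ) ^ (-(1:ℝ)/4)) :=
                Finset.sum_le_sum fun m _ => term_le_large _ hq256 m
          _ = (∑ m ∈ Finset.range (M + 1), (m:ℝ) * (1/2:ℝ)^m) * (4 * (p:ℝ) ^ (-(1:ℝ)/4)) := by
                rw [← Finset.sum_mul]
          _ ≤ 2 * (4 * (p:ℝ) ^ (-(1:ℝ)/4)) :=
                mul_le_mul_of_nonneg_right (geom_bound _) (by positivity)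
          _ = 8 * (p:ℝ) ^ (-(1:ℝ)/4) := by ring
        have h3 : (p:ℝ) ^ (-(1:ℝ)/4) ≤ R^(3*σ/4) * ((p:ℝ))⁻¹ := by
          apply rpow_neg_quarter_le hq0
          calc (p:ℝ) ^ ((3:ℝ)/4) ≤ Rσ ^ ((3:ℝ)/4) :=
                Real.rpow_le_rpow hq0.le hc.2.le (by norm_num)
          _ = R ^ (3*σ/4) := by
                rw [hRσdef, ← Real.rpow_mul hR0.le]
                norm_num
                ring_nf
        calc (Real.log p)^n * ∑ m ∈ Finset.range (M + 1),
              (2:ℝ)^m * (m:ℝ) * (p:ℝ) ^ (3*(m:ℝ)/4) * ((p:ℝ) - 1) / ((p:ℝ) + 1)^(m+1)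
            ≤ (σ*L)^n * (8 * (p:ℝ) ^ (-(1:ℝ)/4)) :=
              mul_le_mul h1 h2 hFnn (pow_nonneg hσL n)
        _ ≤ (σ*L)^n * (8 * (R^(3*σ/4) * ((p:ℝ))⁻¹)) := by
              apply mul_le_mul_of_nonneg_left _ (pow_nonneg hσL n)
              linarith
        _ = W * ((p:ℝ))⁻¹ := by rw [hWdef]; ring
        _ = 0 + W * ((p:ℝ))⁻¹ := (zero_add _).symm
    · rw [if_neg hc]
      by_cases h256 : p < 256
      · rw [if_pos h256]; linarith
      · rw [if_neg h256]; linarith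
  have hu : ∑ p ∈ Finset.range (N+1), (if p < 256 then B1 else 0) ≤ 256 * B1 := by
    rw [← Finset.sum_filter, Finset.sum_const, nsmul_eq_mul]
    apply mul_le_mul_of_nonneg_right _ hB10
    have hsub : (Finset.range (N+1)).filter (· < 256) ⊆ Finset.range 256 := by
      intro x hx
      simp only [Finset.mem_filter, Finset.mem_range] at *
      exact hx.2
    have := (Finset.card_le_card hsub).trans_eq (Finset.card_range 256)
    exact_mod_cast this
  have hv : ∑ p ∈ Finset.range (N+1), W * ((p:ℝ))⁻¹ ≤ W * (2 + σ * L) := by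
    rw [← Finset.mul_sum]
    apply mul_le_mul_of_nonneg_left _ hW0
    have hharm : ∑ p ∈ Finset.range (N+1), ((p:ℝ))⁻¹ = ((harmonic N : ℚ) : ℝ) := by
      rw [Finset.sum_range_succ']
      simp [harmonic]
    rw [hharm]
    have h1 := harmonic_le_one_add_log N
    have hNpos : (0:ℝ) < (N:ℝ) := by
      have : 0 < N := by
        rw [hNdef]
        exact Nat.ceil_pos.mpr (by linarith)
      exact_mod_cast this
    have hNle : (N:ℝ) ≤ 2 * Rσ := by
      have h := Nat.ceil_lt_add_one (show (0:ℝ) ≤ Rσ by linarith)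
      have : (N:ℝ) < Rσ + 1 := by
        rw [hNdef]
        exact_mod_cast h
      linarith
    have hlogN : Real.log N ≤ Real.log 2 + σ * L := by
      calc Real.log N ≤ Real.log (2*Rσ) := Real.log_le_log hNpos hNle
      _ = Real.log 2 + Real.log Rσ := Real.log_mul (by norm_num) (by linarith)
      _ = Real.log 2 + σ * L := by rw [hRσdef, Real.log_rpow hR0, ← hLdef]
    have hlog2 : Real.log 2 ≤ 1 := by
      have := Real.log_two_lt_d9
      linarith
    linarith
  have hsum1 : (∑ p ∈ Finset.range (N+1),
      if Nat.Prime p ∧ (p:ℝ) < Rσ then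
          (Real.log p)^n *
            ∑ m ∈ Finset.range (M + 1),
              (2:ℝ)^m * (m:ℝ) * (p:ℝ) ^ (3*(m:ℝ)/4) * ((p:ℝ) - 1) / ((p:ℝ) + 1)^(m+1)
        else 0)
      ≤ 256 * B1 + W * (2 + σ * L) := by
    calc _ ≤ ∑ p ∈ Finset.range (N+1), ((if p < 256 then B1 else 0) + W * ((p:ℝ))⁻¹) :=
          Finset.sum_le_sum hkey
    _ = (∑ p ∈ Finset.range (N+1), if p < 256 then B1 else 0)
        + ∑ p ∈ Finset.range (N+1), W * ((p:ℝ))⁻¹ := Finset.sum_add_distrib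
    _ ≤ 256 * B1 + W * (2 + σ * L) := add_le_add hu hv
  -- Part A : small primes contribution
  have hE27 : (0.27:ℝ) ≤ E := by
    rw [hEdef]
    have := le_max_right (3*σ/4) (0.27:ℝ)
    linarith
  have hE34 : 3*σ/4 + ε ≤ E := by
    rw [hEdef]
    have := le_max_left (3*σ/4) (0.27:ℝ)
    linarith
  have hpartA : 256 * B1 ≤ C1 * R ^ E := by
    have step1 : (57/50:ℝ)^M ≤ Real.exp (0.2626 * L) := by
      calc (57/50:ℝ)^M ≤ (Real.exp 0.1313)^M := pow_le_pow_left₀ (by norm_num) c_exp M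
      _ = Real.exp (M * 0.1313) := by rw [← Real.exp_nat_mul]
      _ ≤ Real.exp (0.2626 * L) := by
          apply Real.exp_le_exp.mpr
          nlinarith [hMle]
    have step2 : Real.exp (0.2626 * L) = R ^ (0.2626:ℝ) := by
      rw [Real.rpow_def_of_pos hR0, ← hLdef, mul_comm]
    have step3 : ((M:ℝ)+1)^2 ≤ 16 * L^2 := by
      nlinarith [hMle, hLhalf, Nat.cast_nonneg (α := ℝ) M]
    have hLr : L ≤ R ^ (0.0037:ℝ) / 0.0037 := by
      rw [hLdef]
      exact Real.log_le_rpow_div hR0.le (by norm_num)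
    have step4 : L^2 ≤ (R ^ (0.0037:ℝ))^2 / (0.0037:ℝ)^2 := by
      calc L^2 ≤ (R ^ (0.0037:ℝ) / 0.0037)^2 := pow_le_pow_left₀ hL0.le hLr 2
      _ = (R ^ (0.0037:ℝ))^2 / (0.0037:ℝ)^2 := by rw [div_pow]
    have hA : ((M:ℝ)+1)^2 * (57/50:ℝ)^M ≤ (16 / (0.0037:ℝ)^2) * R ^ (0.27:ℝ) := by
      calc ((M:ℝ)+1)^2 * (57/50:ℝ)^M ≤ (16 * L^2) * R ^ (0.2626:ℝ) := by
            rw [← step2]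
            exact mul_le_mul step3 step1 (by positivity) (by positivity)
      _ ≤ (16 * ((R ^ (0.0037:ℝ))^2 / (0.0037:ℝ)^2)) * R ^ (0.2626:ℝ) := by
            apply mul_le_mul_of_nonneg_right _ (by positivity)
            nlinarith [step4]
      _ = (16 / (0.0037:ℝ)^2) * ((R ^ (0.0037:ℝ))^(2:ℕ) * R ^ (0.2626:ℝ)) := by ring
      _ = (16 / (0.0037:ℝ)^2) * R ^ (0.27:ℝ) := by
            rw [← Real.rpow_natCast (R ^ (0.0037:ℝ)) 2, ← Real.rpow_mul hR0.le,
              ← Real.rpow_add hR0]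
            norm_num
    calc 256 * B1 = 256 * (Real.log 256)^n * (((M:ℝ)+1)^2 * (57/50:ℝ)^M) := by
          rw [hB1def]; ring
    _ ≤ 256 * (Real.log 256)^n * ((16 / (0.0037:ℝ)^2) * R ^ (0.27:ℝ)) := by
          apply mul_le_mul_of_nonneg_left hA
          positivity
    _ = C1 * R ^ (0.27:ℝ) := by rw [hC1def]; ring
    _ ≤ C1 * R ^ E := by
          apply mul_le_mul_of_nonneg_left _ hC1.le
          exact Real.rpow_le_rpow_of_exponent_le hR1 hE27
  -- Part B : large primes contribution
  have hpartB : W * (2 + σ * L) ≤ C2 * R ^ E := by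
    have hB1' : L^n * (2+σ*L) ≤ (2+σ) * (1+L)^(n+1) := by
      have e1 : L^n ≤ (1+L)^n := pow_le_pow_left₀ hL0.le (by linarith) n
      have e2 : 2+σ*L ≤ (2+σ)*(1+L) := by nlinarith
      calc L^n*(2+σ*L) ≤ (1+L)^n * ((2+σ)*(1+L)) :=
            mul_le_mul e1 e2 (by nlinarith) (by positivity)
      _ = (2+σ)*(1+L)^(n+1) := by rw [pow_succ]; ring
    have hB2' : (1+L)^(n+1) ≤ (1+1/δ2)^(n+1) * R^ε := by
      have ha : (1:ℝ) ≤ R ^ δ2 := by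
        calc (1:ℝ) = 1 ^ δ2 := (Real.one_rpow δ2).symm
        _ ≤ R ^ δ2 := Real.rpow_le_rpow zero_le_one hR1 hδ2.le
      have hb : L ≤ R^δ2 / δ2 := by
        rw [hLdef]
        exact Real.log_le_rpow_div hR0.le hδ2
      have h1L : 1+L ≤ (1+1/δ2) * R^δ2 := by
        calc 1 + L ≤ R^δ2 + R^δ2/δ2 := by linarith
        _ = (1+1/δ2) * R^δ2 := by ring
      calc (1+L)^(n+1) ≤ ((1+1/δ2) * R^δ2)^(n+1) := pow_le_pow_left₀ (by linarith) h1L _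
      _ = (1+1/δ2)^(n+1) * (R^δ2)^(n+1) := mul_pow _ _ _
      _ = (1+1/δ2)^(n+1) * R^ε := by
            rw [← Real.rpow_natCast (R^δ2) (n+1), ← Real.rpow_mul hR0.le]
            congr 1
            rw [hδ2def]
            have : ((n:ℝ)+1) ≠ 0 := by positivity
            push_cast
            field_simp
    calc W * (2+σ*L) = 8*σ^n * (L^n*(2+σ*L)) * R^(3*σ/4) := by
          rw [hWdef, mul_pow]; ring
    _ ≤ 8*σ^n * ((2+σ) * ((1+1/δ2)^(n+1) * R^ε)) * R^(3*σ/4) := by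
          apply mul_le_mul_of_nonneg_right _ (by positivity)
          apply mul_le_mul_of_nonneg_left _ (by positivity)
          refine hB1'.trans ?_
          apply mul_le_mul_of_nonneg_left hB2' (by linarith)
    _ = C2 * (R^ε * R^(3*σ/4)) := by rw [hC2def]; ring
    _ = C2 * R^(3*σ/4 + ε) := by rw [← Real.rpow_add hR0, add_comm]
    _ ≤ C2 * R^E := by
          apply mul_le_mul_of_nonneg_left _ hC2.le
          exact Real.rpow_le_rpow_of_exponent_le hR1 hE34
  calc (∑ p ∈ Finset.range (N+1),
      if Nat.Prime p ∧ (p:ℝ) < Rσ then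
          (Real.log p)^n *
            ∑ m ∈ Finset.range (M + 1),
              (2:ℝ)^m * (m:ℝ) * (p:ℝ) ^ (3*(m:ℝ)/4) * ((p:ℝ) - 1) / ((p:ℝ) + 1)^(m+1)
        else 0)
      ≤ 256 * B1 + W * (2 + σ * L) := hsum1
  _ ≤ C1 * R ^ E + C2 * R ^ E := add_le_add hpartA hpartB
  _ = (C1 + C2) * R ^ E := by ring
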